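/- Let $d\ge 2$ and $c>0$. There exists a constant $C>0$ depending only on $d$ and $c$ such that for all $h>0$, all $x_0\in\mathbb{R}^{d-1}$: $\int_{\xi\in B_{ch}(x_0)}\int_{t=-ch}^{ch}\Big(\int_{\eta\in B_{ch}(x_0)}(|\xi-\eta|^2+t^2)^{-(d-1)/2}\,d\eta\Big)^2\,dt\,d\xi \le C\, h^{d}$, where $B_{ch}(x_0)\subset\mathbb{R}^{d-1}$ is the ball of radius $ch$ centered at $x_0$. -/

import Mathlib

open MeasureTheory Metric Set

private lemma aux_nontrivial {n : ℕ} (hn : 1 ≤ n) : Nontrivial (EuclideanSpace ℝ (Fin n)) := by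
  apply Module.nontrivial_of_finrank_pos (R := ℝ)
  simp only [finrank_euclideanSpace_fin]; omega

private lemma oneD_integrableOn (ρ : ℝ) :
    IntegrableOn (fun y : ℝ => y ^ (-(3/4 : ℝ))) (Ioo (0:ℝ) ρ) := by
  rcases le_or_gt ρ 0 with hρ | hρ
  · rw [Set.Ioo_eq_empty (by intro h; exact absurd (h.trans_le hρ) (lt_irrefl 0))]
    exact integrableOn_empty
  · exact (intervalIntegrable_iff_integrableOn_Ioo_of_le hρ.le).mp
      (intervalIntegral.intervalIntegrable_rpow' (by norm_num))

private lemma oneD_value {ρ : ℝ} (hρ : 0 < ρ) :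
    ∫ y in Ioo (0:ℝ) ρ, y ^ (-(3/4 : ℝ)) = 4 * ρ ^ ((1/4 : ℝ)) := by
  rw [← integral_Ioc_eq_integral_Ioo, ← intervalIntegral.integral_of_le hρ.le,
    integral_rpow (Or.inl (by norm_num))]
  norm_num
  ring

private lemma absHalf_integrableOn_Icc_pos {R : ℝ} (hR : 0 < R) :
    IntegrableOn (fun t : ℝ => |t| ^ (-(1/2 : ℝ))) (Icc (0:ℝ) R) := by
  have h1 : IntegrableOn (fun t : ℝ => t ^ (-(1/2 : ℝ))) (Icc (0:ℝ) R) := by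
    have h0 := (intervalIntegrable_iff_integrableOn_Ioo_of_le hR.le).mp
      (intervalIntegral.intervalIntegrable_rpow' (r := -(1/2:ℝ)) (by norm_num))
    rw [IntegrableOn, ← Measure.restrict_congr_set Ioo_ae_eq_Icc]
    exact h0
  exact h1.congr_fun (fun t ht => by rw [abs_of_nonneg ht.1]) measurableSet_Icc

private lemma absHalf_integrableOn {R : ℝ} (hR : 0 < R) :
    IntegrableOn (fun t : ℝ => |t| ^ (-(1/2 : ℝ))) (Icc (-R) R) := by
  have hneg : IntegrableOn (fun t : ℝ => |t| ^ (-(1/2 : ℝ))) (Icc (-R) (0:ℝ)) := by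
    have h2 : Integrable ((Icc (0:ℝ) R).indicator (fun t : ℝ => |t| ^ (-(1/2 : ℝ)))) := by
      rw [integrable_indicator_iff measurableSet_Icc]; exact absHalf_integrableOn_Icc_pos hR
    have h3 := h2.comp_neg
    have h4 : (fun t : ℝ => ((Icc (0:ℝ) R).indicator (fun t : ℝ => |t| ^ (-(1/2 : ℝ)))) (-t))
        = (Icc (-R) (0:ℝ)).indicator (fun t : ℝ => |t| ^ (-(1/2 : ℝ))) := by
      ext t
      by_cases ht : t ∈ Icc (-R) (0:ℝ)
      · have hmt : -t ∈ Icc (0:ℝ) R := ⟨by linarith [ht.2], by linarith [ht.1]⟩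
        rw [Set.indicator_of_mem hmt, Set.indicator_of_mem ht, abs_neg]
      · have hmt : -t ∉ Icc (0:ℝ) R := by
          intro hmem; exact ht ⟨by linarith [hmem.2], by linarith [hmem.1]⟩
        rw [Set.indicator_of_notMem hmt, Set.indicator_of_notMem ht]
    rw [h4] at h3
    rwa [← integrable_indicator_iff measurableSet_Icc]
  have := hneg.union (absHalf_integrableOn_Icc_pos hR)
  rwa [Set.Icc_union_Icc_eq_Icc (by linarith) (by linarith)] at this

private lemma absHalf_value {R : ℝ} (hR : 0 < R) :
    ∫ t in Icc (-R) R, |t| ^ (-(1/2 : ℝ)) = 4 * R ^ ((1/2 : ℝ)) := by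
  have hsplit : Icc (-R) (0:ℝ) ∪ Ioc (0:ℝ) R = Icc (-R) R :=
    Set.Icc_union_Ioc_eq_Icc (by linarith) hR.le
  have hpos : ∫ t in Ioc (0:ℝ) R, |t| ^ (-(1/2 : ℝ)) = 2 * R ^ ((1/2 : ℝ)) := by
    rw [← intervalIntegral.integral_of_le hR.le,
      intervalIntegral.integral_congr (g := fun t : ℝ => t ^ (-(1/2:ℝ)))
        (fun t ht => by
          rw [Set.uIcc_of_le hR.le] at ht
          simp only [abs_of_nonneg ht.1]),
      integral_rpow (Or.inl (by norm_num))]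
    norm_num
    ring
  have hneg : ∫ t in Icc (-R) (0:ℝ), |t| ^ (-(1/2 : ℝ)) = 2 * R ^ ((1/2 : ℝ)) := by
    have heq : ∫ t in (-R)..(0:ℝ), |t| ^ (-(1/2 : ℝ))
        = ∫ t in (-R)..(0:ℝ), |(-t)| ^ (-(1/2 : ℝ)) := by
      apply intervalIntegral.integral_congr
      intro t _
      simp [abs_neg]
    rw [integral_Icc_eq_integral_Ioc, ← intervalIntegral.integral_of_le (by linarith : -R ≤ (0:ℝ)),
      heq, intervalIntegral.integral_comp_neg (fun t => |t| ^ (-(1/2:ℝ))), neg_zero, neg_neg,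
      intervalIntegral.integral_of_le hR.le]
    exact hpos
  rw [← hsplit, setIntegral_union (by
      rw [Set.disjoint_left]; rintro t ⟨_, h2⟩ ⟨h3, _⟩; linarith) measurableSet_Ioc
      ((absHalf_integrableOn hR).mono_set (by rw [← hsplit]; exact subset_union_left))
      ((absHalf_integrableOn hR).mono_set (by rw [← hsplit]; exact subset_union_right)),
    hpos, hneg]
  ring
private lemma rpow_base_mono {x y : ℝ} (hx : 0 < x) (hxy : x ≤ y) {p : ℝ} (hp : p ≤ 0) :
    y ^ p ≤ x ^ p := Real.rpow_le_rpow_of_nonpos hx hxy hp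

private lemma polar_bound (n : ℕ) (hn : 1 ≤ n) {ρ t : ℝ} (hρ : 0 < ρ) :
    ∫ η in ball (0 : EuclideanSpace ℝ (Fin n)) ρ,
        (‖η‖^2 + t^2) ^ (-((n:ℝ) - 1/4)/2)
      ≤ (n : ℝ) * (volume (ball (0:EuclideanSpace ℝ (Fin n)) 1)).toReal
          * (4 * ρ ^ ((1/4:ℝ))) := by
  have hs1 : (1:ℝ) ≤ (n:ℝ) := by exact_mod_cast hn
  haveI : Nontrivial (EuclideanSpace ℝ (Fin n)) := by
    apply Module.nontrivial_of_finrank_pos (R := ℝ)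
    simp only [finrank_euclideanSpace_fin]; omega
  set f : ℝ → ℝ := (Iio ρ).indicator (fun y => (y^2 + t^2) ^ (-((n:ℝ) - 1/4)/2)) with hf
  have h1 : ∫ η in ball (0 : EuclideanSpace ℝ (Fin n)) ρ, (‖η‖^2 + t^2) ^ (-((n:ℝ) - 1/4)/2)
      = ∫ x : EuclideanSpace ℝ (Fin n), f ‖x‖ := by
    rw [← integral_indicator measurableSet_ball]
    congr 1
    ext x
    by_cases hx : x ∈ ball (0 : EuclideanSpace ℝ (Fin n)) ρ
    · rw [Set.indicator_of_mem hx, hf,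
        Set.indicator_of_mem (by simpa [Set.mem_Iio] using mem_ball_zero_iff.mp hx)]
    · rw [Set.indicator_of_notMem hx, hf,
        Set.indicator_of_notMem (by simpa [Set.mem_Iio] using fun h => hx (mem_ball_zero_iff.mpr h))]
  rw [h1, integral_fun_norm_addHaar volume f]
  simp only [finrank_euclideanSpace_fin, smul_eq_mul, nsmul_eq_mul]
  have h2 : ∫ y in Ioi (0:ℝ), y ^ (n - 1) * f y
      = ∫ y in Ioo (0:ℝ) ρ, y ^ (n - 1) * (y^2 + t^2) ^ (-((n:ℝ) - 1/4)/2) := by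
    have heq : ∀ y : ℝ, y ^ (n-1) * f y
        = (Iio ρ).indicator (fun y => y ^ (n-1) * (y^2+t^2) ^ (-((n:ℝ) - 1/4)/2)) y := by
      intro y
      rw [hf, ← Set.indicator_mul_right _ (fun y : ℝ => y ^ (n-1))]
    simp_rw [heq]
    rw [setIntegral_indicator measurableSet_Iio, Ioi_inter_Iio]
  rw [h2]
  have h3 : ∫ y in Ioo (0:ℝ) ρ, y ^ (n - 1) * (y^2 + t^2) ^ (-((n:ℝ) - 1/4)/2)
      ≤ ∫ y in Ioo (0:ℝ) ρ, y ^ (-(3/4 : ℝ)) := by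
    apply integral_mono_of_nonneg
    · filter_upwards [(ae_restrict_iff' measurableSet_Ioo).2
        (Filter.Eventually.of_forall (fun y (hy : y ∈ Ioo (0:ℝ) ρ) => hy.1.le))] with y hy
      have : (0:ℝ) ≤ y := hy
      positivity
    · exact oneD_integrableOn ρ
    · rw [Filter.EventuallyLE, ae_restrict_iff' measurableSet_Ioo]
      apply Filter.Eventually.of_forall
      intro y hy
      have hy0 : (0:ℝ) < y := hy.1
      have step1 : (y^2 + t^2) ^ (-((n:ℝ) - 1/4)/2) ≤ (y^2) ^ (-((n:ℝ) - 1/4)/2) := by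
        apply rpow_base_mono (by positivity) (by nlinarith [sq_nonneg t])
        linarith
      have e1 : (y^2 : ℝ) ^ (-((n:ℝ) - 1/4)/2) = y ^ (-((n:ℝ) - 1/4)) := by
        rw [← Real.rpow_natCast y 2, ← Real.rpow_mul hy0.le]
        congr 1
        push_cast
        ring
      have e2 : (y:ℝ) ^ (n-1) * y ^ (-((n:ℝ) - 1/4)) = y ^ (-(3/4:ℝ)) := by
        rw [← Real.rpow_natCast y (n-1), ← Real.rpow_add hy0]
        congr 1
        have hc : ((n - 1 : ℕ) : ℝ) = (n:ℝ) - 1 := by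
          rw [Nat.cast_sub hn, Nat.cast_one]
        rw [hc]
        ring
      calc y ^ (n-1) * (y^2 + t^2) ^ (-((n:ℝ) - 1/4)/2)
          ≤ y ^ (n-1) * (y^2) ^ (-((n:ℝ) - 1/4)/2) := by
            apply mul_le_mul_of_nonneg_left step1 (by positivity)
        _ = y ^ (-(3/4:ℝ)) := by rw [e1, e2]
  calc (n:ℝ) * ((volume (ball (0:EuclideanSpace ℝ (Fin n)) 1)).toReal
        * ∫ y in Ioo (0:ℝ) ρ, y ^ (n - 1) * (y^2 + t^2) ^ (-((n:ℝ) - 1/4)/2))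
      ≤ (n:ℝ) * ((volume (ball (0:EuclideanSpace ℝ (Fin n)) 1)).toReal
        * ∫ y in Ioo (0:ℝ) ρ, y ^ (-(3/4:ℝ))) := by
        apply mul_le_mul_of_nonneg_left _ (by positivity)
        exact mul_le_mul_of_nonneg_left h3 ENNReal.toReal_nonneg
    _ = (n:ℝ) * (volume (ball (0:EuclideanSpace ℝ (Fin n)) 1)).toReal * (4 * ρ ^ ((1/4:ℝ))) := by
        rw [oneD_value hρ]; ring
private lemma inner_bound (n : ℕ) (hn : 1 ≤ n) {R t : ℝ} (hR : 0 < R) (ht : t ≠ 0)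
    (x0 ξ : EuclideanSpace ℝ (Fin n)) (hξ : ξ ∈ ball x0 R) :
    ∫ η in ball x0 R, (‖ξ - η‖^2 + t^2) ^ (-(n:ℝ)/2)
      ≤ ((n:ℝ) * (volume (ball (0:EuclideanSpace ℝ (Fin n)) 1)).toReal
          * (4 * (2*R) ^ ((1/4:ℝ)))) * |t| ^ (-(1/4:ℝ)) := by
  have habs : (0:ℝ) < |t| := abs_pos.mpr ht
  have hpt : ∀ η : EuclideanSpace ℝ (Fin n), (‖ξ - η‖^2 + t^2) ^ (-(n:ℝ)/2)
      ≤ (‖ξ - η‖^2 + t^2) ^ (-((n:ℝ)-1/4)/2) * |t| ^ (-(1/4:ℝ)) := by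
    intro η
    have hX : (0:ℝ) < ‖ξ - η‖^2 + t^2 := by positivity
    have hsplit : (‖ξ - η‖^2 + t^2) ^ (-(n:ℝ)/2)
        = (‖ξ - η‖^2 + t^2) ^ (-((n:ℝ)-1/4)/2) * (‖ξ - η‖^2 + t^2) ^ (-(1/8:ℝ)) := by
      rw [← Real.rpow_add hX]; congr 1; ring
    have hb : (‖ξ - η‖^2 + t^2) ^ (-(1/8:ℝ)) ≤ |t| ^ (-(1/4:ℝ)) := by
      have h1 : (|t|^2 : ℝ) ≤ ‖ξ - η‖^2 + t^2 := by
        rw [sq_abs]; nlinarith [sq_nonneg ‖ξ - η‖]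
      calc (‖ξ - η‖^2 + t^2) ^ (-(1/8:ℝ)) ≤ (|t|^2) ^ (-(1/8:ℝ)) :=
            rpow_base_mono (by positivity) h1 (by norm_num)
        _ = |t| ^ (-(1/4:ℝ)) := by
            rw [← Real.rpow_natCast |t| 2, ← Real.rpow_mul habs.le]; norm_num
    rw [hsplit]
    exact mul_le_mul_of_nonneg_left hb (Real.rpow_nonneg hX.le _)
  have hcont : Continuous (fun η : EuclideanSpace ℝ (Fin n) =>
      (‖ξ - η‖^2 + t^2) ^ (-((n:ℝ)-1/4)/2)) := by
    apply Continuous.rpow_const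
    · fun_prop
    · intro η; left; positivity
  have hint : ∀ (c : EuclideanSpace ℝ (Fin n)) (r : ℝ),
      IntegrableOn (fun η : EuclideanSpace ℝ (Fin n) =>
        (‖ξ - η‖^2 + t^2) ^ (-((n:ℝ)-1/4)/2)) (ball c r) :=
    fun c r => (hcont.continuousOn.integrableOn_compact
      (isCompact_closedBall c r)).mono_set ball_subset_closedBall
  have h2 : ∫ η in ball x0 R, (‖ξ - η‖^2 + t^2) ^ (-(n:ℝ)/2)
      ≤ ∫ η in ball x0 R, (‖ξ - η‖^2 + t^2) ^ (-((n:ℝ)-1/4)/2) * |t| ^ (-(1/4:ℝ)) := by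
    apply integral_mono_of_nonneg
    · exact Filter.Eventually.of_forall (fun η => Real.rpow_nonneg (by positivity) _)
    · exact ((hint x0 R).mul_const _)
    · exact Filter.Eventually.of_forall hpt
  have h3 : ∫ η in ball x0 R, (‖ξ - η‖^2 + t^2) ^ (-((n:ℝ)-1/4)/2) * |t| ^ (-(1/4:ℝ))
      = (∫ η in ball x0 R, (‖ξ - η‖^2 + t^2) ^ (-((n:ℝ)-1/4)/2)) * |t| ^ (-(1/4:ℝ)) :=
    integral_mul_const _ _
  have hsub : ball x0 R ⊆ ball ξ (2*R) := by
    intro η hη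
    rw [mem_ball] at *
    have htri := dist_triangle η x0 ξ
    have hd : dist x0 ξ < R := by rw [dist_comm]; exact hξ
    linarith
  have h4 : ∫ η in ball x0 R, (‖ξ - η‖^2 + t^2) ^ (-((n:ℝ)-1/4)/2)
      ≤ ∫ η in ball ξ (2*R), (‖ξ - η‖^2 + t^2) ^ (-((n:ℝ)-1/4)/2) :=
    setIntegral_mono_set (hint ξ (2*R))
      (Filter.Eventually.of_forall (fun η => Real.rpow_nonneg (by positivity) _))
      (HasSubset.Subset.eventuallyLE hsub)
  have h5 : ∫ η in ball ξ (2*R), (‖ξ - η‖^2 + t^2) ^ (-((n:ℝ)-1/4)/2)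
      = ∫ η in ball (0:EuclideanSpace ℝ (Fin n)) (2*R), (‖η‖^2 + t^2) ^ (-((n:ℝ)-1/4)/2) := by
    rw [← integral_indicator measurableSet_ball, ← integral_indicator measurableSet_ball]
    have hswap : ∀ η : EuclideanSpace ℝ (Fin n),
        (ball ξ (2*R)).indicator (fun η => (‖ξ - η‖^2 + t^2) ^ (-((n:ℝ)-1/4)/2)) η
        = (ball (0:EuclideanSpace ℝ (Fin n)) (2*R)).indicator
            (fun y => (‖y‖^2 + t^2) ^ (-((n:ℝ)-1/4)/2)) (ξ - η) := by
      intro η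
      by_cases hη : η ∈ ball ξ (2*R)
      · rw [Set.indicator_of_mem hη, Set.indicator_of_mem (mem_ball_zero_iff.mpr (by
          rw [mem_ball, dist_comm] at hη
          rw [← dist_eq_norm]; exact hη))]
      · rw [Set.indicator_of_notMem hη, Set.indicator_of_notMem (fun hmem => hη (by
          rw [mem_ball_zero_iff, ← dist_eq_norm] at hmem
          rw [mem_ball, dist_comm]; exact hmem))]
    simp_rw [hswap]
    exact integral_sub_left_eq_self _ volume ξ
  have h6 := polar_bound n hn (t := t) (ρ := 2*R) (by linarith)
  calc ∫ η in ball x0 R, (‖ξ - η‖^2 + t^2) ^ (-(n:ℝ)/2)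
      ≤ (∫ η in ball x0 R, (‖ξ - η‖^2 + t^2) ^ (-((n:ℝ)-1/4)/2)) * |t| ^ (-(1/4:ℝ)) := by
        rw [← h3]; exact h2
    _ ≤ (∫ η in ball (0:EuclideanSpace ℝ (Fin n)) (2*R), (‖η‖^2 + t^2) ^ (-((n:ℝ)-1/4)/2))
          * |t| ^ (-(1/4:ℝ)) := by
        apply mul_le_mul_of_nonneg_right _ (Real.rpow_nonneg habs.le _)
        rw [← h5]; exact h4
    _ ≤ ((n:ℝ) * (volume (ball (0:EuclideanSpace ℝ (Fin n)) 1)).toReal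
          * (4 * (2*R) ^ ((1/4:ℝ)))) * |t| ^ (-(1/4:ℝ)) :=
        mul_le_mul_of_nonneg_right h6 (Real.rpow_nonneg habs.le _)
theorem stmt1 (d : ℕ) (hd : 2 ≤ d) (c : ℝ) (hc : 0 < c) :
    ∃ C : ℝ, 0 < C ∧ ∀ h : ℝ, 0 < h → ∀ x0 : EuclideanSpace ℝ (Fin (d - 1)),
      (∫ ξ in Metric.ball x0 (c * h),
        ∫ t in Set.Icc (-(c * h)) (c * h),
          (∫ η in Metric.ball x0 (c * h),
            (‖ξ - η‖ ^ 2 + t ^ 2) ^ (-((d : ℝ) - 1) / 2)) ^ 2)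
      ≤ C * h ^ (d : ℝ) := by
  set n := d - 1 with hn_def
  have hn : 1 ≤ n := by omega
  haveI : Nontrivial (EuclideanSpace ℝ (Fin n)) := by
    apply Module.nontrivial_of_finrank_pos (R := ℝ)
    simp only [finrank_euclideanSpace_fin]; omega
  set V := (volume (ball (0 : EuclideanSpace ℝ (Fin n)) 1)).toReal with hV_def
  have hV : 0 < V := by
    rw [hV_def]
    exact ENNReal.toReal_pos (measure_ball_pos volume _ one_pos).ne' measure_ball_lt_top.ne
  have hnpos : (0:ℝ) < (n:ℝ) := by exact_mod_cast Nat.pos_of_ne_zero (by omega)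
  refine ⟨64 * (n:ℝ)^2 * V^3 * (2:ℝ)^((1/2:ℝ)) * c^d, by positivity, ?_⟩
  intro h hh x0
  set R := c * h with hR_def
  have hR : 0 < R := by positivity
  have hexp : -((d : ℝ) - 1) / 2 = -((n:ℕ):ℝ)/2 := by
    have : ((n:ℕ):ℝ) = (d:ℝ) - 1 := by
      rw [hn_def, Nat.cast_sub (by omega), Nat.cast_one]
    rw [this]
  simp only [hexp]
  set K := (n:ℝ) * V * (4 * (2*R) ^ ((1/4:ℝ))) with hK_def
  have hK : 0 ≤ K := by positivity
  -- inner-inner integral is nonneg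
  have hinn_nonneg : ∀ (ξ : EuclideanSpace ℝ (Fin n)) (t : ℝ),
      0 ≤ ∫ η in ball x0 R, (‖ξ - η‖ ^ 2 + t ^ 2) ^ (-((n:ℕ):ℝ)/2) :=
    fun ξ t => integral_nonneg (fun η => Real.rpow_nonneg (by positivity) _)
  -- bound for the t-integral, for ξ in the ball
  have hF : ∀ ξ ∈ ball x0 R,
      (∫ t in Icc (-R) R,
        (∫ η in ball x0 R, (‖ξ - η‖ ^ 2 + t ^ 2) ^ (-((n:ℕ):ℝ)/2)) ^ 2)
      ≤ K^2 * (4 * R ^ ((1/2:ℝ))) := by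
    intro ξ hξ
    have hstep : (∫ t in Icc (-R) R,
        (∫ η in ball x0 R, (‖ξ - η‖ ^ 2 + t ^ 2) ^ (-((n:ℕ):ℝ)/2)) ^ 2)
        ≤ ∫ t in Icc (-R) R, K^2 * |t| ^ (-(1/2:ℝ)) := by
      apply integral_mono_of_nonneg
      · exact Filter.Eventually.of_forall (fun t => sq_nonneg _)
      · exact (absHalf_integrableOn hR).const_mul _
      · have hae : ∀ᵐ t : ℝ ∂(volume.restrict (Icc (-R) R)), t ≠ 0 := by
          apply ae_restrict_of_ae
          have h0 : (volume ({(0:ℝ)} : Set ℝ)) = 0 := measure_singleton 0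
          filter_upwards [measure_eq_zero_iff_ae_notMem.mp h0] with t ht
          simpa using ht
        filter_upwards [hae] with t ht
        have hb := inner_bound n hn hR ht x0 ξ hξ
        calc (∫ η in ball x0 R, (‖ξ - η‖ ^ 2 + t ^ 2) ^ (-((n:ℕ):ℝ)/2)) ^ 2
            ≤ (K * |t| ^ (-(1/4:ℝ)))^2 := by
              apply pow_le_pow_left₀ (hinn_nonneg ξ t) _ 2
              rw [hK_def]; exact hb
          _ = K^2 * |t| ^ (-(1/2:ℝ)) := by
              rw [mul_pow]
              congr 1
              rw [← Real.rpow_natCast (|t| ^ (-(1/4:ℝ))) 2,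
                ← Real.rpow_mul (abs_nonneg t)]
              norm_num
    have hval : ∫ t in Icc (-R) R, K^2 * |t| ^ (-(1/2:ℝ))
        = K^2 * (4 * R ^ ((1/2:ℝ))) := by
      rw [integral_const_mul, absHalf_value hR]
    rw [hval] at hstep
    exact hstep
  -- outer integral
  have houter : (∫ ξ in ball x0 R,
      ∫ t in Icc (-R) R,
        (∫ η in ball x0 R, (‖ξ - η‖ ^ 2 + t ^ 2) ^ (-((n:ℕ):ℝ)/2)) ^ 2)
      ≤ (volume (ball x0 R)).toReal * (K^2 * (4 * R ^ ((1/2:ℝ)))) := by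
    have := integral_mono_of_nonneg (μ := volume.restrict (ball x0 R))
      (f := fun ξ => ∫ t in Icc (-R) R,
        (∫ η in ball x0 R, (‖ξ - η‖ ^ 2 + t ^ 2) ^ (-((n:ℕ):ℝ)/2)) ^ 2)
      (g := fun _ => K^2 * (4 * R ^ ((1/2:ℝ))))
      (Filter.Eventually.of_forall (fun ξ => integral_nonneg (fun t => sq_nonneg _)))
      (integrableOn_const measure_ball_lt_top.ne)
      ((ae_restrict_iff' measurableSet_ball).2 (Filter.Eventually.of_forall hF))
    rw [setIntegral_const, smul_eq_mul] at this
    exact this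
  -- compute the volume of the ball
  have hvol : (volume (ball x0 R)).toReal = R^n * V := by
    rw [Measure.addHaar_ball volume x0 hR.le, ENNReal.toReal_mul,
      ENNReal.toReal_ofReal (by positivity), finrank_euclideanSpace_fin]
  rw [hvol] at houter
  refine houter.trans (le_of_eq ?_)
  -- final arithmetic
  have esq : ((2*R) ^ ((1/4:ℝ)))^2 = (2:ℝ)^((1/2:ℝ)) * R^((1/2:ℝ)) := by
    rw [← Real.rpow_natCast ((2*R) ^ ((1/4:ℝ))) 2, ← Real.rpow_mul (by positivity)]
    norm_num
    rw [Real.mul_rpow (by norm_num) hR.le]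
  have ehalf : R^((1/2:ℝ)) * R^((1/2:ℝ)) = R := by
    rw [← Real.rpow_add hR]
    norm_num
  have ehd : h ^ ((d:ℕ):ℝ) = h ^ (d:ℕ) := Real.rpow_natCast h d
  have hdn : (d:ℕ) = n + 1 := by omega
  have eK : K^2 = 16 * (n:ℝ)^2 * V^2 * ((2:ℝ)^((1/2:ℝ)) * R^((1/2:ℝ))) := by
    rw [hK_def, mul_pow, mul_pow, mul_pow, esq]; ring
  calc R^n * V * (K^2 * (4 * R ^ ((1/2:ℝ))))
      = 64 * (n:ℝ)^2 * V^3 * (2:ℝ)^((1/2:ℝ))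
          * (R^n * (R^((1/2:ℝ)) * R^((1/2:ℝ)))) := by
        rw [eK]; ring
    _ = 64 * (n:ℝ)^2 * V^3 * (2:ℝ)^((1/2:ℝ)) * c^d * h ^ ((d:ℕ):ℝ) := by
        rw [ehalf, ehd, hdn, hR_def]
        ring
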